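/- For (x, y, z) ∈ ℝ³ with x² + y² + z² = 1, the following are equivalent: (i) there exists λ ∈ ℝ with x·(1 + 2z² + λ) = 0, y·(1 + 2z² + λ) = 0 and z·(4z² + λ) = 0, and there is NO ν ∈ ℝ with x = ν x, y = ν y, 2z = ν z; (ii) z² = 1/2 and x² + y² = 1/2. (Paper's Theorem 3.2(2): the non-harmonic biharmonic unit sections among left-invariant unit vector fields on Sol₃ are exactly the two circles z = ±1/√2, x² + y² = 1/2.) -/
import Mathlib


/-- Theorem 3.2(2): the non-harmonic biharmonic unit sections among left-invariant
unit vector fields on Sol₃ are exactly the two circles z = ±1/√2, x² + y² = 1/2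
(algebraic form). -/
theorem sol3_nonharmonic_biharmonic_unit_sections
    (x y z : ℝ) (hxyz : x ^ 2 + y ^ 2 + z ^ 2 = 1) :
    ((∃ l : ℝ,
        x * (1 + 2 * z ^ 2 + l) = 0 ∧
        y * (1 + 2 * z ^ 2 + l) = 0 ∧
        z * (4 * z ^ 2 + l) = 0) ∧
      ¬ ∃ ν : ℝ, x = ν * x ∧ y = ν * y ∧ 2 * z = ν * z)
    ↔ (z ^ 2 = 1 / 2 ∧ x ^ 2 + y ^ 2 = 1 / 2) := by
  constructor
  · rintro ⟨⟨l, hx, hy, hz⟩, hnu⟩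
    have hz0 : z ≠ 0 := by
      intro h
      exact hnu ⟨1, by ring, by ring, by rw [h]; ring⟩
    have hxy : x ≠ 0 ∨ y ≠ 0 := by
      by_contra h
      push_neg at h
      exact hnu ⟨2, by rw [h.1]; ring, by rw [h.2]; ring, by ring⟩
    have h1 : 1 + 2 * z ^ 2 + l = 0 := by
      rcases hxy with h | h
      · exact (mul_eq_zero.mp hx).resolve_left h
      · exact (mul_eq_zero.mp hy).resolve_left h
    have h2 : 4 * z ^ 2 + l = 0 := (mul_eq_zero.mp hz).resolve_left hz0
    have hz2 : z ^ 2 = 1 / 2 := by linarith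
    exact ⟨hz2, by linarith⟩
  · rintro ⟨hz2, hxy⟩
    have hz0 : z ≠ 0 := by
      intro h; rw [h] at hz2; norm_num at hz2
    refine ⟨⟨-2, by rw [hz2]; ring, by rw [hz2]; ring, by rw [show (4:ℝ) * z ^ 2 + -2 = 4 * (z^2) - 2 from by ring, hz2]; ring⟩, ?_⟩
    rintro ⟨ν, hx, hy, hzν⟩
    have hν : ν = 2 := by
      have := mul_right_cancel₀ hz0 (show 2 * z = ν * z from hzν)
      linarith
    rw [hν] at hx hy
    have : x = 0 := by linarith
    have : y = 0 := by nlinarith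
    nlinarith
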